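/- For every integer n > 1 and all r, s ≥ 1, the number of tuples (a,b,c,d,x,y,k,l) ∈ ℕ₀² × ℕ⁶ with gcd(a,c) = 1, gcd(b,d) = 1, such that k(a+c) = u^r and l(b+d) = v^s for positive integers u, v with ux + vy = n, equals ∑_{(u,v,x,y) ∈ B(n)} u^r v^s = ∑_{m=1}^{n-1} σ_r(m) σ_s(n−m). -/

import Mathlib

open Finset

def AFin (N : ℕ) : Finset (ℕ × ℕ × ℕ) :=
  ((range (N+1)) ×ˢ (range (N+1)) ×ˢ (range (N+1))).filter
    (fun t => 0 < t.2.1 ∧ 0 < t.2.2 ∧ Nat.gcd t.1 t.2.1 = 1 ∧ t.2.2 * (t.1 + t.2.1) = N)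

lemma mem_AFin {N : ℕ} {t : ℕ × ℕ × ℕ} :
    t ∈ AFin N ↔ 0 < t.2.1 ∧ 0 < t.2.2 ∧ Nat.gcd t.1 t.2.1 = 1 ∧ t.2.2 * (t.1 + t.2.1) = N := by
  simp only [AFin, mem_filter, mem_product, mem_range]
  constructor
  · tauto
  · rintro ⟨h1, h2, h3, h4⟩
    refine ⟨⟨?_, ?_, ?_⟩, h1, h2, h3, h4⟩ <;>
    · have h5 : t.1 + t.2.1 ≤ N := by
        calc t.1 + t.2.1 ≤ t.2.2 * (t.1 + t.2.1) := Nat.le_mul_of_pos_left _ h2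
        _ = N := h4
      have h6 : t.2.2 ≤ N := by
        calc t.2.2 ≤ t.2.2 * (t.1 + t.2.1) := Nat.le_mul_of_pos_right _ (by omega)
        _ = N := h4
      omega

lemma AFin_card (N : ℕ) (hN : 0 < N) : (AFin N).card = N := by
  have key : (N.divisors.sigma (fun e => (range e).filter (fun a => Nat.gcd a e = 1))).card
      = (AFin N).card := by
    apply Finset.card_nbij' (fun t => (t.2, t.1 - t.2, N / t.1)) (fun t => ⟨t.1 + t.2.1, t.1⟩)
    · rintro ⟨e, a⟩ ht
      simp only [Finset.mem_coe, Finset.mem_sigma, Nat.mem_divisors, mem_filter, mem_range] at ht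
      obtain ⟨⟨hdvd, _⟩, ha, hgcd⟩ := ht
      have he : 0 < e := by omega
      rw [Finset.mem_coe, mem_AFin]
      refine ⟨by simp; omega, Nat.div_pos (Nat.le_of_dvd hN hdvd) he, ?_, ?_⟩
      · show Nat.gcd a (e - a) = 1
        rw [Nat.gcd_sub_self_right ha.le]; exact hgcd
      · simp only
        rw [show a + (e - a) = e by omega, Nat.div_mul_cancel hdvd]
    · rintro t ht
      rw [Finset.mem_coe, mem_AFin] at ht
      obtain ⟨h1, h2, h3, h4⟩ := ht
      simp only [Finset.mem_coe, Finset.mem_sigma, Nat.mem_divisors, mem_filter, mem_range]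
      refine ⟨⟨⟨t.2.2, by rw [← h4, Nat.mul_comm]⟩, by omega⟩, by omega, ?_⟩
      show Nat.gcd t.1 (t.1 + t.2.1) = 1
      rw [Nat.add_comm, Nat.gcd_add_self_right]; exact h3
    · rintro ⟨e, a⟩ ht
      simp only [Finset.mem_coe, Finset.mem_sigma, Nat.mem_divisors, mem_filter, mem_range] at ht
      obtain ⟨⟨hdvd, _⟩, ha, hgcd⟩ := ht
      simp only
      congr 1 <;> omega
    · rintro t ht
      rw [Finset.mem_coe, mem_AFin] at ht
      obtain ⟨h1, h2, h3, h4⟩ := ht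
      have he : 0 < t.1 + t.2.1 := by omega
      have : N / (t.1 + t.2.1) = t.2.2 := by
        rw [← h4, Nat.mul_div_cancel _ he]
      ext <;> simp [this] <;> omega
  rw [← key, Finset.card_sigma]
  have : ∀ e ∈ N.divisors, ((range e).filter (fun a => Nat.gcd a e = 1)).card = e.totient := by
    intro e _
    rw [Nat.totient]
    congr 1
    apply Finset.filter_congr
    intro a _
    simp [Nat.Coprime, Nat.coprime_comm]
  rw [Finset.sum_congr rfl this, Nat.sum_totient]

open Finset

/-- `σ_k(m) = ∑_{d ∣ m} d^k`. -/
def sigmaFun (k m : ℕ) : ℕ := ∑ d ∈ m.divisors, d ^ k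

/-- `B(n) = {(a,b,x,y) ∈ ℕ⁴ : ax + by = n}` as a finset. -/
def Bn (n : ℕ) : Finset (ℕ × ℕ × ℕ × ℕ) :=
  ((Finset.range (n + 1)) ×ˢ (Finset.range (n + 1)) ×ˢ (Finset.range (n + 1)) ×ˢ
      (Finset.range (n + 1))).filter
    (fun p => 0 < p.1 ∧ 0 < p.2.1 ∧ 0 < p.2.2.1 ∧ 0 < p.2.2.2 ∧
      p.1 * p.2.2.1 + p.2.1 * p.2.2.2 = n)

lemma mem_Bn {n : ℕ} {q : ℕ × ℕ × ℕ × ℕ} :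
    q ∈ Bn n ↔ 0 < q.1 ∧ 0 < q.2.1 ∧ 0 < q.2.2.1 ∧ 0 < q.2.2.2 ∧
      q.1 * q.2.2.1 + q.2.1 * q.2.2.2 = n := by
  simp only [Bn, mem_filter, mem_product, mem_range]
  constructor
  · tauto
  · rintro ⟨h1, h2, h3, h4, h5⟩
    refine ⟨⟨?_, ?_, ?_, ?_⟩, h1, h2, h3, h4, h5⟩ <;>
    · have a1 : q.1 ≤ q.1 * q.2.2.1 := Nat.le_mul_of_pos_right _ h3
      have a2 : q.2.1 ≤ q.2.1 * q.2.2.2 := Nat.le_mul_of_pos_right _ h4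
      have a3 : q.2.2.1 ≤ q.1 * q.2.2.1 := Nat.le_mul_of_pos_left _ h1
      have a4 : q.2.2.2 ≤ q.2.1 * q.2.2.2 := Nat.le_mul_of_pos_left _ h2
      omega

set_option synthInstance.maxSize 1000 in
instance instDec8 : DecidableEq (ℕ × ℕ × ℕ × ℕ × ℕ × ℕ × ℕ × ℕ) := inferInstance

def TFin (n r s : ℕ) : Finset (ℕ × ℕ × ℕ × ℕ × ℕ × ℕ × ℕ × ℕ) :=
  (Bn n).biUnion (fun q => ((AFin (q.1 ^ r)) ×ˢ (AFin (q.2.1 ^ s))).image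
    (fun t => (t.1.1, t.2.1, t.1.2.1, t.2.2.1, q.2.2.1, q.2.2.2, t.1.2.2, t.2.2.2)))

lemma TFin_card (n r s : ℕ) (hr : 1 ≤ r) (hs : 1 ≤ s) :
    (TFin n r s).card = ∑ p ∈ Bn n, p.1 ^ r * p.2.1 ^ s := by
  rw [TFin, Finset.card_biUnion]
  · apply Finset.sum_congr rfl
    intro q hq
    rw [mem_Bn] at hq
    rw [Finset.card_image_of_injective, Finset.card_product, AFin_card _ (pow_pos hq.1 r),
      AFin_card _ (pow_pos hq.2.1 s)]
    intro t1 t2 h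
    simp only [Prod.mk.injEq] at h
    ext <;> tauto
  · intro q1 hq1 q2 hq2 hne
    rw [Function.onFun, Finset.disjoint_left]
    intro p hp1 hp2
    simp only [Finset.mem_image, Finset.mem_product] at hp1 hp2
    obtain ⟨t1, ⟨ha1, hb1⟩, rfl⟩ := hp1
    obtain ⟨t2, ⟨ha2, hb2⟩, hpe⟩ := hp2
    rw [mem_AFin] at ha1 hb1 ha2 hb2
    rw [Finset.mem_coe, mem_Bn] at hq1 hq2
    simp only [Prod.mk.injEq] at hpe
    apply hne
    obtain ⟨e1, e2, e3, e4, e5, e6, e7, e8⟩ := hpe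
    have hu : q2.1 ^ r = q1.1 ^ r := by
      rw [← ha1.2.2.2, ← ha2.2.2.2, e1, e3, e7]
    have hv : q2.2.1 ^ s = q1.2.1 ^ s := by
      rw [← hb1.2.2.2, ← hb2.2.2.2, e2, e4, e8]
    have hu' : q2.1 = q1.1 := Nat.pow_left_injective (by omega) hu
    have hv' : q2.2.1 = q1.2.1 := Nat.pow_left_injective (by omega) hv
    ext
    · exact hu'.symm
    · exact hv'.symm
    · exact e5.symm
    · exact e6.symm

theorem stmt19 (n r s : ℕ) (hn : 1 < n) (hr : 1 ≤ r) (hs : 1 ≤ s) :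
    Set.ncard {p : ℕ × ℕ × ℕ × ℕ × ℕ × ℕ × ℕ × ℕ |
        ∃ a b c d x y k l : ℕ, p = (a, b, c, d, x, y, k, l) ∧
          0 < c ∧ 0 < d ∧ 0 < x ∧ 0 < y ∧ 0 < k ∧ 0 < l ∧
          Nat.gcd a c = 1 ∧ Nat.gcd b d = 1 ∧
          ∃ u v : ℕ, 0 < u ∧ 0 < v ∧ k * (a + c) = u ^ r ∧ l * (b + d) = v ^ s ∧
            u * x + v * y = n} =
      ∑ p ∈ Bn n, p.1 ^ r * p.2.1 ^ s ∧
    ∑ p ∈ Bn n, p.1 ^ r * p.2.1 ^ s =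
      ∑ m ∈ Finset.Ico 1 n, sigmaFun r m * sigmaFun s (n - m) := by
  constructor
  · have hset : {p : ℕ × ℕ × ℕ × ℕ × ℕ × ℕ × ℕ × ℕ |
        ∃ a b c d x y k l : ℕ, p = (a, b, c, d, x, y, k, l) ∧
          0 < c ∧ 0 < d ∧ 0 < x ∧ 0 < y ∧ 0 < k ∧ 0 < l ∧
          Nat.gcd a c = 1 ∧ Nat.gcd b d = 1 ∧
          ∃ u v : ℕ, 0 < u ∧ 0 < v ∧ k * (a + c) = u ^ r ∧ l * (b + d) = v ^ s ∧
            u * x + v * y = n} = ↑(TFin n r s) := by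
      ext p
      rw [Finset.mem_coe]
      simp only [Set.mem_setOf_eq, TFin, Finset.mem_biUnion, Finset.mem_image,
        Finset.mem_product]
      constructor
      · rintro ⟨a, b, c, d, x, y, k, l, rfl, hc, hd, hx, hy, hk, hl, hac, hbd,
          u, v, hu, hv, hku, hlv, huv⟩
        refine ⟨(u, v, x, y), mem_Bn.2 ⟨hu, hv, hx, hy, huv⟩, ((a, c, k), (b, d, l)),
          ⟨mem_AFin.2 ⟨hc, hk, hac, by simpa using hku⟩,
           mem_AFin.2 ⟨hd, hl, hbd, by simpa using hlv⟩⟩, rfl⟩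
      · rintro ⟨q, hq, t, ⟨ha, hb⟩, rfl⟩
        rw [mem_AFin] at ha hb
        rw [mem_Bn] at hq
        exact ⟨t.1.1, t.2.1, t.1.2.1, t.2.2.1, q.2.2.1, q.2.2.2, t.1.2.2, t.2.2.2, rfl,
          ha.1, hb.1, hq.2.2.1, hq.2.2.2.1, ha.2.1, hb.2.1, ha.2.2.1, hb.2.2.1,
          q.1, q.2.1, hq.1, hq.2.1, ha.2.2.2, hb.2.2.2, hq.2.2.2.2⟩
    rw [hset, Set.ncard_coe_finset, TFin_card n r s hr hs]
  · -- part 2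
    have key : ∑ p ∈ Bn n, p.1 ^ r * p.2.1 ^ s =
        ∑ t ∈ (Finset.Ico 1 n).sigma (fun m => m.divisors ×ˢ (n - m).divisors),
          t.2.1 ^ r * t.2.2 ^ s := by
      apply Finset.sum_nbij' (fun q => ⟨q.1 * q.2.2.1, (q.1, q.2.1)⟩)
        (fun t => (t.2.1, t.2.2, t.1 / t.2.1, (n - t.1) / t.2.2))
      · intro q hq
        rw [mem_Bn] at hq
        obtain ⟨h1, h2, h3, h4, h5⟩ := hq
        simp only [Finset.mem_sigma, Finset.mem_Ico, Finset.mem_product, Nat.mem_divisors]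
        have a1 : 0 < q.1 * q.2.2.1 := Nat.mul_pos h1 h3
        have a2 : 0 < q.2.1 * q.2.2.2 := Nat.mul_pos h2 h4
        refine ⟨⟨by omega, by omega⟩, ⟨Dvd.intro _ rfl, by omega⟩, ⟨⟨q.2.2.2, by omega⟩, by omega⟩⟩
      · rintro ⟨m, u, v⟩ ht
        simp only [Finset.mem_sigma, Finset.mem_Ico, Finset.mem_product, Nat.mem_divisors] at ht
        obtain ⟨⟨hm1, hm2⟩, ⟨hum, hm0⟩, ⟨hvm, hnm0⟩⟩ := ht
        have hm0' : 0 < m := Nat.pos_of_ne_zero hm0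
        have hnm0' : 0 < n - m := Nat.pos_of_ne_zero hnm0
        have hu : 0 < u := Nat.pos_of_dvd_of_pos hum hm0'
        have hv : 0 < v := Nat.pos_of_dvd_of_pos hvm hnm0'
        rw [mem_Bn]
        refine ⟨hu, hv, Nat.div_pos (Nat.le_of_dvd hm0' hum) hu,
          Nat.div_pos (Nat.le_of_dvd hnm0' hvm) hv, ?_⟩
        simp only
        rw [Nat.mul_div_cancel' hum, Nat.mul_div_cancel' hvm]
        omega
      · intro q hq
        rw [mem_Bn] at hq
        obtain ⟨h1, h2, h3, h4, h5⟩ := hq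
        simp only
        have e1 : q.1 * q.2.2.1 / q.1 = q.2.2.1 := Nat.mul_div_cancel_left _ h1
        have e2 : (n - q.1 * q.2.2.1) = q.2.1 * q.2.2.2 := by omega
        have e3 : q.2.1 * q.2.2.2 / q.2.1 = q.2.2.2 := Nat.mul_div_cancel_left _ h2
        ext <;> simp [e1, e2, e3]
      · rintro ⟨m, u, v⟩ ht
        simp only [Finset.mem_sigma, Finset.mem_Ico, Finset.mem_product, Nat.mem_divisors] at ht
        obtain ⟨⟨hm1, hm2⟩, ⟨hum, hm0⟩, ⟨hvm, hnm0⟩⟩ := ht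
        have : u * (m / u) = m := Nat.mul_div_cancel' hum
        simp only [this]
      · intro q hq
        rfl
    rw [key, Finset.sum_sigma]
    apply Finset.sum_congr rfl
    intro m hm
    rw [Finset.sum_product, sigmaFun, sigmaFun, Finset.sum_mul_sum]
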